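/- Let A be an n×n positive definite real symmetric matrix and let B be an n×n positive semidefinite real symmetric matrix with B ≠ 0. Then for s ≥ 0, the function D(s) = tr((s·B + A)⁻¹) is strictly decreasing in s. In particular, if s' > s ≥ 0 then tr((s'·B + A)⁻¹) < tr((s·B + A)⁻¹). -/

import Mathlib

open Matrix

/-- A nonnegative scalar multiple of a PSD real matrix is PSD. -/
lemma aux_smul_posSemidef {m : Type*} [Fintype m] {B : Matrix m m ℝ}
    (hB : B.PosSemidef) {c : ℝ} (hc : 0 ≤ c) : (c • B).PosSemidef := by
  refine ⟨?_, fun x => ?_⟩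
  · unfold Matrix.IsHermitian
    rw [conjTranspose_smul, hB.1]
    simp
  · exact (hB.smul hc).2 x

/-- A nonzero PSD real matrix has positive trace. -/
lemma aux_trace_pos {m : Type*} [Fintype m] [DecidableEq m] {C : Matrix m m ℝ}
    (hC : C.PosSemidef) (h0 : C ≠ 0) : 0 < C.trace := by
  have hH := hC.isHermitian
  have htr : C.trace = ∑ i, hH.eigenvalues i := by
    nth_rewrite 1 [hH.spectral_theorem]
    rw [Unitary.conjStarAlgAut_apply, Matrix.trace_mul_comm, ← Matrix.mul_assoc, Unitary.coe_star_mul_self, Matrix.one_mul,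
      Matrix.trace_diagonal]
    simp
  have hne : hH.eigenvalues ≠ 0 := by
    contrapose! h0
    have := hH.spectral_theorem
    rwa [h0, Pi.comp_zero, RCLike.ofReal_zero,
      (by rfl : Function.const m (0 : ℝ) = fun _ ↦ 0),
      diagonal_zero, Unitary.conjStarAlgAut_apply, Matrix.mul_zero, Matrix.zero_mul] at this
  obtain ⟨i, hi⟩ := Function.ne_iff.mp hne
  rw [htr]
  refine Finset.sum_pos' (fun j _ => hC.eigenvalues_nonneg j) ⟨i, Finset.mem_univ i, ?_⟩
  exact lt_of_le_of_ne (hC.eigenvalues_nonneg i) (Ne.symm hi)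

theorem stmt8 {n : ℕ} (A B : Matrix (Fin n) (Fin n) ℝ)
    (hA : A.PosDef) (hB : B.PosSemidef) (hB0 : B ≠ 0)
    {s s' : ℝ} (hs : 0 ≤ s) (hss' : s < s') :
    ((s' • B + A)⁻¹).trace < ((s • B + A)⁻¹).trace := by
  set M : Matrix (Fin n) (Fin n) ℝ := s • B + A with hMdef
  set M' : Matrix (Fin n) (Fin n) ℝ := s' • B + A with hM'def
  have hM : M.PosDef := Matrix.PosDef.posSemidef_add (aux_smul_posSemidef hB hs) hA
  have hM' : M'.PosDef := Matrix.PosDef.posSemidef_add (aux_smul_posSemidef hB (hs.trans hss'.le)) hA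
  set Δ : Matrix (Fin n) (Fin n) ℝ := (s' - s) • B with hΔdef
  have hΔ : Δ.PosSemidef := aux_smul_posSemidef hB (by linarith)
  have hΔ0 : Δ ≠ 0 := smul_ne_zero (sub_pos.mpr hss').ne' hB0
  have hMM' : M' = M + Δ := by
    rw [hMdef, hM'def, hΔdef, sub_smul]
    abel
  -- invertibility facts
  have hMdet : IsUnit M.det := hM.det_pos.ne'.isUnit
  have hM'det : IsUnit M'.det := hM'.det_pos.ne'.isUnit
  have h1 : M⁻¹ * M = 1 := nonsing_inv_mul M hMdet
  have h2 : M * M⁻¹ = 1 := mul_nonsing_inv M hMdet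
  have h3 : M'⁻¹ * M' = 1 := nonsing_inv_mul M' hM'det
  have h4 : M' * M'⁻¹ = 1 := mul_nonsing_inv M' hM'det
  -- the key algebraic identity
  have hkey : M⁻¹ - M'⁻¹ = M'⁻¹ * (Δ + Δ * M⁻¹ * Δ) * M'⁻¹ := by
    have e1 : Δ + Δ * M⁻¹ * Δ = Δ * M⁻¹ * M' := by
      rw [hMM', Matrix.mul_add, Matrix.mul_assoc, Matrix.mul_assoc, h1, Matrix.mul_one,
        ← Matrix.mul_assoc]
    rw [e1]
    have e2 : M'⁻¹ * (Δ * M⁻¹ * M') * M'⁻¹ = M'⁻¹ * Δ * M⁻¹ := by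
      rw [Matrix.mul_assoc M'⁻¹ (Δ * M⁻¹ * M') M'⁻¹, Matrix.mul_assoc (Δ * M⁻¹) M' M'⁻¹,
        h4, Matrix.mul_one, ← Matrix.mul_assoc]
    rw [e2]
    have e3 : Δ = M' - M := by rw [hMM']; abel
    rw [e3, Matrix.mul_sub, Matrix.sub_mul, h3, Matrix.one_mul,
      Matrix.mul_assoc, h2, Matrix.mul_one]
  -- positivity of the difference
  have hX : (Δ + Δ * M⁻¹ * Δ).PosSemidef := by
    have h5 : (Δᴴ * M⁻¹ * Δ).PosSemidef :=
      (hM.inv.posSemidef).conjTranspose_mul_mul_same Δ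
    rw [hΔ.isHermitian] at h5
    exact hΔ.add h5
  have hD : (M⁻¹ - M'⁻¹).PosSemidef := by
    rw [hkey]
    have := hX.conjTranspose_mul_mul_same M'⁻¹
    rwa [hM'.inv.isHermitian] at this
  have hDne : M⁻¹ - M'⁻¹ ≠ 0 := by
    intro h
    have hinv : M⁻¹ = M'⁻¹ := sub_eq_zero.mp h
    have : M = M' := by
      rw [← nonsing_inv_nonsing_inv M hMdet, hinv, nonsing_inv_nonsing_inv M' hM'det]
    have hΔz : Δ = 0 := by rw [hMM'] at this; exact left_eq_add.mp this
    exact hΔ0 hΔz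
  have := aux_trace_pos hD hDne
  rw [trace_sub] at this
  linarith
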